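/- For every y > e and every integer n ≥ 2, |z(y) − z_n(y)| ≤ (log y)^{⌊n/2⌋} · z_1(y) · log log z(y) / ( (log z_1(y))^{n−1} · (log z(y))^{⌊n/2⌋+1} ). -/

import Mathlib

open Real

/-- `z(y)`: the inverse function of `y(z) = z log z`, `z ≥ 1/e`. -/
noncomputable def zFun (y : ℝ) : ℝ :=
  Function.invFunOn (fun x : ℝ => x * Real.log x) (Set.Ici (Real.exp (-1))) y

/-- `z_0(y) = y`, `z_n(y) = y / log z_{n-1}(y)` for `n ≥ 1`. -/
noncomputable def zIter : ℕ → ℝ → ℝ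
  | 0, y => y
  | n + 1, y => y / Real.log (zIter n y)

/-- The bound appearing in the theorem, as a function of `n`. -/
noncomputable def Bnd (y z : ℝ) (n : ℕ) : ℝ :=
  (Real.log y) ^ (n / 2) * (y / Real.log y) * Real.log (Real.log z) /
    ((Real.log (y / Real.log y)) ^ (n - 1) * (Real.log z) ^ (n / 2 + 1))

theorem aux_bound (y z : ℝ) (hy : Real.exp 1 < y) (hze : Real.exp 1 < z)
    (hzy : z * Real.log z = y) :
    ∀ n : ℕ, 1 ≤ n → |z - zIter n y| ≤ Bnd y z n := by
  have he1 : (1:ℝ) < Real.exp 1 := by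
    have := Real.exp_lt_exp.mpr (zero_lt_one : (0:ℝ) < 1)
    simpa using this
  have hz0 : (0:ℝ) < z := by linarith
  have hy0 : (0:ℝ) < y := by linarith
  have hL : 1 < Real.log z := by
    calc (1:ℝ) = Real.log (Real.exp 1) := (Real.log_exp 1).symm
    _ < Real.log z := Real.log_lt_log (Real.exp_pos 1) hze
  have hly : 1 < Real.log y := by
    calc (1:ℝ) = Real.log (Real.exp 1) := (Real.log_exp 1).symm
    _ < Real.log y := Real.log_lt_log (Real.exp_pos 1) hy
  have hM : 0 < Real.log (Real.log z) := Real.log_pos hL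
  have hlogy_eq : Real.log y = Real.log z + Real.log (Real.log z) := by
    rw [← hzy, Real.log_mul (ne_of_gt hz0) (by linarith)]
  have hz_eq : z = y / Real.log z := by
    rw [← hzy]; field_simp
  have hz1e : Real.exp 1 < y / Real.log y := by
    have h2 : Real.log (y / Real.exp 1) < y / Real.exp 1 - 1 :=
      Real.log_lt_sub_one_of_pos (by positivity) (by
        intro h
        have : y = Real.exp 1 := by
          field_simp at h; linarith
        linarith)
    rw [Real.log_div (ne_of_gt hy0) (ne_of_gt (Real.exp_pos 1)), Real.log_exp] at h2
    have h1 : Real.log y < y / Real.exp 1 := by linarith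
    rw [lt_div_iff₀ (by linarith : (0:ℝ) < Real.log y)]
    calc Real.exp 1 * Real.log y < Real.exp 1 * (y / Real.exp 1) := by
          apply mul_lt_mul_of_pos_left h1 (Real.exp_pos 1)
    _ = y := by field_simp
  have hz1pos : (0:ℝ) < y / Real.log y := by positivity
  have hlz1 : 1 < Real.log (y / Real.log y) := by
    calc (1:ℝ) = Real.log (Real.exp 1) := (Real.log_exp 1).symm
    _ < Real.log (y / Real.log y) := Real.log_lt_log (Real.exp_pos 1) hz1e
  have hz_lt_y : z < y := by
    have := mul_lt_mul_of_pos_left hL hz0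
    rw [mul_one] at this
    linarith [hzy]
  have hz1_le_z : y / Real.log y ≤ z := by
    rw [hz_eq]
    gcongr <;> linarith
  -- the invariant: iterates stay in [y/log y, y] and alternate around z
  have inv : ∀ n : ℕ, (y / Real.log y ≤ zIter n y ∧ zIter n y ≤ y) ∧
      ((Even n → z ≤ zIter n y) ∧ (¬ Even n → zIter n y ≤ z)) := by
    intro n
    induction n with
    | zero =>
      refine ⟨⟨div_le_self hy0.le hly.le, le_refl _⟩, fun _ => ?_, fun h => absurd Even.zero h⟩
      simpa [zIter] using hz_lt_y.le
    | succ n ih =>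
      obtain ⟨⟨h1, h2⟩, h3, h4⟩ := ih
      have hw0 : 0 < zIter n y := lt_of_lt_of_le hz1pos h1
      have hlw1 : 1 < Real.log (zIter n y) :=
        lt_of_lt_of_le hlz1 (Real.log_le_log hz1pos h1)
      have hlw_le : Real.log (zIter n y) ≤ Real.log y := Real.log_le_log hw0 h2
      have hstep : zIter (n+1) y = y / Real.log (zIter n y) := rfl
      refine ⟨⟨?_, ?_⟩, ?_, ?_⟩
      · rw [hstep]; gcongr <;> linarith
      · rw [hstep]; exact div_le_self hy0.le hlw1.le
      · intro hev
        have hodd : ¬ Even n := by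
          rw [Nat.even_add_one] at hev; exact hev
        have hwz : zIter n y ≤ z := h4 hodd
        have hlog : Real.log (zIter n y) ≤ Real.log z := Real.log_le_log hw0 hwz
        rw [hstep, hz_eq]
        gcongr <;> linarith
      · intro hodd
        have hev : Even n := by
          rw [Nat.even_add_one, not_not] at hodd; exact hodd
        have hwz : z ≤ zIter n y := h3 hev
        have hlog : Real.log z ≤ Real.log (zIter n y) := Real.log_le_log hz0 hwz
        rw [hstep, hz_eq]
        gcongr <;> linarith
  -- main induction
  intro n hn
  induction n, hn using Nat.le_induction with
  | base =>
    have h1 : zIter 1 y = y / Real.log y := by simp [zIter]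
    have key : z - y / Real.log y =
        y / Real.log y * Real.log (Real.log z) / Real.log z := by
      have hL0 : Real.log z ≠ 0 := by linarith
      have hly0 : Real.log y ≠ 0 := by linarith
      field_simp
      linear_combination Real.log y * hzy + y * hlogy_eq
    rw [h1, key, abs_of_nonneg (by positivity)]
    apply le_of_eq
    simp [Bnd]
  | succ n hn ih =>
    obtain ⟨⟨hw1, hw2⟩, hwev, hwodd⟩ := inv n
    have hw0 : 0 < zIter n y := lt_of_lt_of_le hz1pos hw1
    have hlw1 : 1 < Real.log (zIter n y) :=
      lt_of_lt_of_le hlz1 (Real.log_le_log hz1pos hw1)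
    have hlw_le : Real.log (zIter n y) ≤ Real.log y := Real.log_le_log hw0 hw2
    have hlz1_le : Real.log (y / Real.log y) ≤ Real.log (zIter n y) :=
      Real.log_le_log hz1pos hw1
    have hstep : zIter (n+1) y = y / Real.log (zIter n y) := rfl
    set w := zIter n y with hw_def
    by_cases hev : Even n
    · -- z ≤ w, so z_{n+1} ≤ z
      have hzw : z ≤ w := hwev hev
      have hLlw : Real.log z ≤ Real.log w := Real.log_le_log hz0 hzw
      have h1 : zIter (n+1) y ≤ z := by
        rw [hstep, hz_eq]; gcongr <;> linarith
      have habs : |z - zIter (n+1) y| = z - zIter (n+1) y := abs_of_nonneg (by linarith)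
      have hkey : z - zIter (n+1) y =
          y * (Real.log w - Real.log z) / (Real.log z * Real.log w) := by
        rw [hstep]
        have hL0 : Real.log z ≠ 0 := by linarith
        have hlw0 : Real.log w ≠ 0 := by linarith
        field_simp
        linear_combination Real.log w * hzy
      have hlog_le : Real.log w - Real.log z ≤ (w - z) / z := by
        have h2 : Real.log (w / z) ≤ w / z - 1 :=
          Real.log_le_sub_one_of_pos (by positivity)
        rw [Real.log_div (ne_of_gt hw0) (ne_of_gt hz0)] at h2
        have h3 : w / z - 1 = (w - z) / z := by field_simp
        linarith
      have hBpos : 0 < Real.log (y / Real.log y) := by linarith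
      calc |z - zIter (n+1) y|
          = y * (Real.log w - Real.log z) / (Real.log z * Real.log w) := by
            rw [habs, hkey]
        _ ≤ y * ((w - z) / z) / (Real.log z * Real.log w) := by
            gcongr <;> first | positivity | linarith
        _ = (w - z) / Real.log w := by
            rw [← hzy]
            have hL0 : Real.log z ≠ 0 := by linarith
            have hlw0 : Real.log w ≠ 0 := by linarith
            field_simp
        _ ≤ (w - z) / Real.log (y / Real.log y) := by
            gcongr <;> first | positivity | linarith
        _ = |z - w| / Real.log (y / Real.log y) := by
            rw [abs_sub_comm, abs_of_nonneg (by linarith)]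
        _ ≤ Bnd y z n / Real.log (y / Real.log y) := by gcongr
        _ = Bnd y z (n+1) := by
            obtain ⟨k, hk⟩ := hev
            have e1 : (n+1)/2 = n/2 := by omega
            have e2 : n + 1 - 1 = (n - 1) + 1 := by omega
            simp only [Bnd, e1, e2, pow_succ]
            ring
    · -- w ≤ z, so z ≤ z_{n+1}
      have hzw : w ≤ z := hwodd hev
      have hLlw : Real.log w ≤ Real.log z := Real.log_le_log hw0 hzw
      have h1 : z ≤ zIter (n+1) y := by
        rw [hstep, hz_eq]; gcongr <;> linarith
      have habs : |z - zIter (n+1) y| = zIter (n+1) y - z := by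
        rw [abs_sub_comm]; exact abs_of_nonneg (by linarith)
      have hkey : zIter (n+1) y - z =
          y * (Real.log z - Real.log w) / (Real.log z * Real.log w) := by
        rw [hstep]
        have hL0 : Real.log z ≠ 0 := by linarith
        have hlw0 : Real.log w ≠ 0 := by linarith
        field_simp
        linear_combination (-Real.log w) * hzy
      have hlog_le : Real.log z - Real.log w ≤ (z - w) / w := by
        have h2 : Real.log (z / w) ≤ z / w - 1 :=
          Real.log_le_sub_one_of_pos (by positivity)
        rw [Real.log_div (ne_of_gt hz0) (ne_of_gt hw0)] at h2
        have h3 : z / w - 1 = (z - w) / w := by field_simp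
        linarith
      have hBpos : 0 < Real.log (y / Real.log y) := by linarith
      calc |z - zIter (n+1) y|
          = y * (Real.log z - Real.log w) / (Real.log z * Real.log w) := by
            rw [habs, hkey]
        _ ≤ y * ((z - w) / w) / (Real.log z * Real.log w) := by
            gcongr <;> first | positivity | linarith
        _ ≤ (z - w) * Real.log y / (Real.log z * Real.log (y / Real.log y)) := by
            have hyw : y / w ≤ Real.log y := by
              rw [div_le_iff₀ hw0]
              have h5 := (div_le_iff₀ (by linarith : (0:ℝ) < Real.log y)).mp hw1
              linarith [mul_comm w (Real.log y)]
            have hnum : y * ((z - w) / w) ≤ (z - w) * Real.log y := by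
              have h6 : y * ((z - w) / w) = (z - w) * (y / w) := by
                field_simp
              rw [h6]
              exact mul_le_mul_of_nonneg_left hyw (by linarith)
            apply div_le_div₀ (mul_nonneg (by linarith) (by linarith)) hnum (by positivity)
            have : Real.log (y / Real.log y) ≤ Real.log w := hlz1_le
            nlinarith
        _ = |z - w| * Real.log y / (Real.log z * Real.log (y / Real.log y)) := by
            rw [abs_of_nonneg (by linarith : (0:ℝ) ≤ z - w)]
        _ ≤ Bnd y z n * Real.log y / (Real.log z * Real.log (y / Real.log y)) := by
            gcongr <;> first | positivity | linarith
        _ = Bnd y z (n+1) := by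
            have e1 : (n+1)/2 = n/2 + 1 := by
              rcases Nat.even_or_odd n with h | h
              · exact absurd h hev
              · obtain ⟨k, hk⟩ := h; omega
            have e2 : n + 1 - 1 = (n - 1) + 1 := by omega
            simp only [Bnd, e1, e2, pow_succ]
            ring

theorem zFun_sub_zIter_bound (y : ℝ) (hy : y > Real.exp 1) (n : ℕ) (hn : 2 ≤ n) :
    |zFun y - zIter n y| ≤
      (Real.log y) ^ (n / 2) * zIter 1 y * Real.log (Real.log (zFun y)) /
        ((Real.log (zIter 1 y)) ^ (n - 1) * (Real.log (zFun y)) ^ (n / 2 + 1)) := by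
  have hy0 : (0:ℝ) < y := lt_trans (Real.exp_pos 1) hy
  -- existence of a preimage for invFunOn
  have hab : Real.exp (-1) ≤ Real.exp y := Real.exp_le_exp.mpr (by linarith)
  have hc : ContinuousOn (fun x : ℝ => x * Real.log x)
      (Set.Icc (Real.exp (-1)) (Real.exp y)) := by
    apply ContinuousOn.mul continuousOn_id
    apply Real.continuousOn_log.mono
    intro x hx
    simp only [Set.mem_compl_iff, Set.mem_singleton_iff]
    have := hx.1
    have h0 : (0:ℝ) < Real.exp (-1) := Real.exp_pos _
    intro h; rw [h] at this; linarith
  have hmem : y ∈ Set.Icc ((fun x : ℝ => x * Real.log x) (Real.exp (-1)))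
      ((fun x : ℝ => x * Real.log x) (Real.exp y)) := by
    constructor
    · simp only [Real.log_exp]
      have : (0:ℝ) < Real.exp (-1) := Real.exp_pos _
      nlinarith
    · simp only [Real.log_exp]
      have h1 : (1:ℝ) ≤ Real.exp y := by
        rw [← Real.exp_zero]; exact Real.exp_le_exp.mpr (by linarith)
      nlinarith
  obtain ⟨x, hx1, hx2⟩ := intermediate_value_Icc hab hc hmem
  have hex : ∃ a ∈ Set.Ici (Real.exp (-1)), (fun x : ℝ => x * Real.log x) a = y :=
    ⟨x, hx1.1, hx2⟩
  have hfz : zFun y * Real.log (zFun y) = y := Function.invFunOn_eq hex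
  have hzmem : zFun y ∈ Set.Ici (Real.exp (-1)) := Function.invFunOn_mem hex
  have hz0 : (0:ℝ) < zFun y := lt_of_lt_of_le (Real.exp_pos _) hzmem
  have hze : Real.exp 1 < zFun y := by
    by_contra h
    push_neg at h
    have hlog : Real.log (zFun y) ≤ 1 := by
      calc Real.log (zFun y) ≤ Real.log (Real.exp 1) := Real.log_le_log hz0 h
      _ = 1 := Real.log_exp 1
    rcases le_or_gt 0 (Real.log (zFun y)) with h2 | h2
    · nlinarith
    · nlinarith [Real.exp_pos 1]
  have h1 : zIter 1 y = y / Real.log y := by simp [zIter]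
  have := aux_bound y (zFun y) hy hze hfz n (by omega)
  rw [h1]
  simpa [Bnd, h1] using this
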